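/- Let $r \geq 3$ be odd, $q = e^{2\pi i/r}$, and let $n_r = (r-1)/2$ if $r \equiv 1 \pmod 4$ and $n_r = (r-3)/2$ if $r \equiv 3 \pmod 4$. Suppose $m_1, m_2, m_3, m_4 \in I_r$ are such that the 6-tuple $(n_r, m_1, m_2, n_r, m_3, m_4)$ is $r$-admissible. Then the quantum 6j-symbol $\left|\begin{smallmatrix} n_r & m_1 & m_2 \\ n_r & m_3 & m_4 \end{smallmatrix}\right|$ (a priori a complex number) is real-valued. -/
import Mathlib


open scoped Real
open Complex Finset

noncomputable section

/-- The quantum integer `[n]` at `q = exp(2πi/r)`. -/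
def qint (r : ℕ) (n : ℤ) : ℂ :=
  (Complex.exp (2 * Real.pi * Complex.I / r) ^ n -
    Complex.exp (2 * Real.pi * Complex.I / r) ^ (-n)) /
  (Complex.exp (2 * Real.pi * Complex.I / r) -
    (Complex.exp (2 * Real.pi * Complex.I / r))⁻¹)

/-- The quantum factorial `[N]! = ∏_{k=1}^N [k]`, with `[0]! = 1`. -/
def qfact (r N : ℕ) : ℂ := ∏ k ∈ Finset.Icc 1 N, qint r (k : ℤ)

/-- A triple `(a₁,a₂,a₃)` of elements of `I_r = {0,…,r-2}` is `r`-admissible. -/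
def AdmissibleTriple (r a₁ a₂ a₃ : ℕ) : Prop :=
  a₁ ≤ r - 2 ∧ a₂ ≤ r - 2 ∧ a₃ ≤ r - 2 ∧
  Even (a₁ + a₂ + a₃) ∧
  a₁ + a₂ + a₃ ≤ 2 * (r - 2) ∧
  a₃ ≤ a₁ + a₂ ∧ a₂ ≤ a₁ + a₃ ∧ a₁ ≤ a₂ + a₃

/-- A 6-tuple `(a₁,…,a₆)` is `r`-admissible. -/
def Admissible6 (r a₁ a₂ a₃ a₄ a₅ a₆ : ℕ) : Prop :=
  AdmissibleTriple r a₁ a₂ a₃ ∧ AdmissibleTriple r a₁ a₅ a₆ ∧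
  AdmissibleTriple r a₂ a₄ a₆ ∧ AdmissibleTriple r a₃ a₄ a₅

/-- `Δ(a₁,a₂,a₃)`, using the principal complex square root, which realizes the
convention `√y = i√|y|` for negative real `y`. -/
def qdelta (r a₁ a₂ a₃ : ℕ) : ℂ :=
  (qfact r ((a₁ + a₂ - a₃) / 2) * qfact r ((a₁ + a₃ - a₂) / 2) *
      qfact r ((a₂ + a₃ - a₁) / 2) / qfact r ((a₁ + a₂ + a₃) / 2 + 1)) ^ (1 / 2 : ℂ)

/-- The quantum 6j-symbol `|a₁ a₂ a₃; a₄ a₅ a₆|` at `q = exp(2πi/r)`. -/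
def sixj (r a₁ a₂ a₃ a₄ a₅ a₆ : ℕ) : ℂ :=
  Complex.I ^ (-(a₁ + a₂ + a₃ + a₄ + a₅ + a₆ : ℤ)) *
    qdelta r a₁ a₂ a₃ * qdelta r a₁ a₅ a₆ * qdelta r a₂ a₄ a₆ * qdelta r a₃ a₄ a₅ *
    ∑ k ∈ Finset.Icc
        (max (max ((a₁ + a₂ + a₃) / 2) ((a₁ + a₅ + a₆) / 2))
             (max ((a₂ + a₄ + a₆) / 2) ((a₃ + a₄ + a₅) / 2)))
        (min ((a₁ + a₂ + a₄ + a₅) / 2)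
             (min ((a₁ + a₃ + a₄ + a₆) / 2) ((a₂ + a₃ + a₅ + a₆) / 2))),
      ((-1 : ℂ) ^ k * qfact r (k + 1)) /
        (qfact r (k - (a₁ + a₂ + a₃) / 2) * qfact r (k - (a₁ + a₅ + a₆) / 2) *
         qfact r (k - (a₂ + a₄ + a₆) / 2) * qfact r (k - (a₃ + a₄ + a₅) / 2) *
         qfact r ((a₁ + a₂ + a₄ + a₅) / 2 - k) * qfact r ((a₁ + a₃ + a₄ + a₆) / 2 - k) *
         qfact r ((a₂ + a₃ + a₅ + a₆) / 2 - k))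

/-- `n_r = (r-1)/2` if `r ≡ 1 mod 4`, and `n_r = (r-3)/2` if `r ≡ 3 mod 4`. -/
def nr (r : ℕ) : ℕ := if r % 4 = 1 then (r - 1) / 2 else (r - 3) / 2

/-- real version of qint -/
def sqr (r k : ℕ) : ℝ := Real.sin (2 * Real.pi * k / r) / Real.sin (2 * Real.pi / r)

def Fq (r N : ℕ) : ℝ := ∏ k ∈ Finset.Icc 1 N, sqr r k

lemma exp_pow_eq (r : ℕ) (k : ℤ) :
    Complex.exp (2 * Real.pi * Complex.I / r) ^ k =
      Complex.exp (((2 * Real.pi * k / r : ℝ) : ℂ) * Complex.I) := by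
  rw [← Complex.exp_int_mul]
  congr 1
  push_cast
  ring

lemma exp_pow_ri (r : ℕ) (k : ℤ) :
    Complex.exp (2 * Real.pi * Complex.I / r) ^ k =
      ((Real.cos (2 * Real.pi * k / r) : ℝ) : ℂ) +
        ((Real.sin (2 * Real.pi * k / r) : ℝ) : ℂ) * Complex.I := by
  rw [exp_pow_eq, Complex.exp_mul_I, Complex.ofReal_cos, Complex.ofReal_sin]

lemma qint_eq (r : ℕ) (hr : 3 ≤ r) (k : ℕ) : qint r k = ((sqr r k : ℝ) : ℂ) := by
  have hrpos : (0:ℝ) < r := by positivity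
  have hsin : Real.sin (2 * Real.pi / r) ≠ 0 := by
    refine ne_of_gt (Real.sin_pos_of_pos_of_lt_pi (by positivity) ?_)
    rw [div_lt_iff₀ hrpos]
    have h3 : (3:ℝ) ≤ r := by exact_mod_cast hr
    nlinarith [Real.pi_pos]
  have h1 : (Complex.exp (2 * Real.pi * Complex.I / r))⁻¹ =
      Complex.exp (2 * Real.pi * Complex.I / r) ^ (-1 : ℤ) := by simp
  unfold qint sqr
  rw [h1]
  rw [exp_pow_ri r ((k:ℕ):ℤ), exp_pow_ri r (-((k:ℕ):ℤ)), exp_pow_ri r (-1:ℤ)]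
  have hb : Complex.exp (2 * Real.pi * Complex.I / r) =
      ((Real.cos (2 * Real.pi * ((1:ℤ)) / r) : ℝ) : ℂ) +
        ((Real.sin (2 * Real.pi * ((1:ℤ)) / r) : ℝ) : ℂ) * Complex.I := by
    rw [← zpow_one (Complex.exp (2 * Real.pi * Complex.I / r)), exp_pow_ri]
  rw [hb]
  have e1 : (2 * Real.pi * ((-(k:ℤ)) : ℤ) / r : ℝ) = -(2 * Real.pi * k / r) := by
    push_cast; ring
  have e2 : (2 * Real.pi * ((1:ℤ)) / r : ℝ) = 2 * Real.pi / r := by push_cast; ring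
  have e3 : (2 * Real.pi * ((-1:ℤ)) / r : ℝ) = -(2 * Real.pi / r) := by push_cast; ring
  have e4 : (2 * Real.pi * ((k:ℕ):ℤ) / r : ℝ) = 2 * Real.pi * k / r := by push_cast; ring
  rw [e1, e2, e3, e4, Real.cos_neg, Real.sin_neg, Real.cos_neg, Real.sin_neg]
  have hsin' : ((Real.sin (2 * Real.pi / r) : ℝ) : ℂ) ≠ 0 := by exact_mod_cast hsin
  have hsinC : Complex.sin (2 * (Real.pi:ℂ) / (r:ℂ)) ≠ 0 := by
    have he : ((2*Real.pi/r : ℝ):ℂ) = 2 * (Real.pi:ℂ) / (r:ℂ) := by push_cast; ring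
    rw [← he, ← Complex.ofReal_sin]
    exact_mod_cast hsin
  push_cast
  field_simp
  ring

lemma qfact_eq (r : ℕ) (hr : 3 ≤ r) (N : ℕ) : qfact r N = ((Fq r N : ℝ) : ℂ) := by
  unfold qfact Fq
  rw [Complex.ofReal_prod]
  exact Finset.prod_congr rfl fun k _ => qint_eq r hr k

lemma sin_base_pos (r : ℕ) (hr : 3 ≤ r) : 0 < Real.sin (2 * Real.pi / r) := by
  have hrpos : (0:ℝ) < r := by positivity
  refine Real.sin_pos_of_pos_of_lt_pi (by positivity) ?_
  rw [div_lt_iff₀ hrpos]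
  have h3 : (3:ℝ) ≤ r := by exact_mod_cast hr
  nlinarith [Real.pi_pos]

lemma sqr_pos (r k : ℕ) (hr : 3 ≤ r) (hk1 : 1 ≤ k) (hk2 : 2 * k < r) : 0 < sqr r k := by
  have hrpos : (0:ℝ) < r := by positivity
  refine div_pos (Real.sin_pos_of_pos_of_lt_pi (by positivity) ?_) (sin_base_pos r hr)
  rw [div_lt_iff₀ hrpos]
  have : (2*k:ℝ) < r := by exact_mod_cast hk2
  nlinarith [Real.pi_pos]

lemma sqr_neg (r k : ℕ) (hr : 3 ≤ r) (hk1 : r < 2 * k) (hk2 : k ≤ r - 1) : sqr r k < 0 := by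
  have hrpos : (0:ℝ) < r := by positivity
  have hkr : (k:ℝ) < r := by
    have : k < r := by omega
    exact_mod_cast this
  have hrk : (r:ℝ) < 2*k := by exact_mod_cast hk1
  have hs : Real.sin (2 * Real.pi * k / r) < 0 := by
    have h1 : Real.sin (2 * Real.pi * k / r) = -Real.sin (2 * Real.pi * k / r - Real.pi) := by
      rw [Real.sin_sub_pi, neg_neg]
    rw [h1, neg_lt, neg_zero]
    refine Real.sin_pos_of_pos_of_lt_pi ?_ ?_
    · rw [sub_pos, lt_div_iff₀ hrpos]
      nlinarith [Real.pi_pos]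
    · rw [sub_lt_iff_lt_add, div_lt_iff₀ hrpos]
      nlinarith [Real.pi_pos]
  exact div_neg_of_neg_of_pos hs (sin_base_pos r hr)

lemma Fq_sign (r : ℕ) (hr : 3 ≤ r) (hodd : r % 2 = 1) :
    ∀ N, N ≤ r - 1 → 0 < (-1:ℝ)^(N - (r-1)/2) * Fq r N := by
  intro N
  induction N with
  | zero => intro _; simp [Fq]
  | succ N ih =>
    intro hN
    have hstep : Fq r (N+1) = Fq r N * sqr r (N+1) := by
      unfold Fq
      rw [Finset.prod_Icc_succ_top (by omega)]
    rw [hstep]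
    have ihp := ih (by omega)
    by_cases hc : 2 * (N+1) < r
    · have h0 : N + 1 - (r-1)/2 = 0 := by omega
      have h0' : N - (r-1)/2 = 0 := by omega
      rw [h0]
      rw [h0'] at ihp
      simp only [pow_zero, one_mul] at ihp ⊢
      exact mul_pos ihp (sqr_pos r (N+1) hr (by omega) hc)
    · have hgt : r < 2 * (N+1) := by omega
      have hsub : N + 1 - (r-1)/2 = (N - (r-1)/2) + 1 := by omega
      have hre : (-1:ℝ)^(N+1 - (r-1)/2) * (Fq r N * sqr r (N+1)) =
          ((-1:ℝ)^(N - (r-1)/2) * Fq r N) * (-(sqr r (N+1))) := by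
        rw [hsub, pow_succ]; ring
      rw [hre]
      exact mul_pos ihp (neg_pos.mpr (sqr_neg r (N+1) hr hgt (by omega)))

lemma Fq_ne (r : ℕ) (hr : 3 ≤ r) (hodd : r % 2 = 1) (N : ℕ) (hN : N ≤ r - 1) :
    Fq r N ≠ 0 := by
  intro h
  have := Fq_sign r hr hodd N hN
  rw [h, mul_zero] at this
  exact lt_irrefl _ this

lemma cpow_half_sq (x : ℝ) (hx : x ≠ 0) : (((x:ℂ))^((1:ℂ)/2))^2 = (x:ℂ) := by
  have hx' : (x:ℂ) ≠ 0 := by exact_mod_cast hx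
  rw [sq, ← Complex.cpow_add _ _ hx']
  norm_num

lemma cpow_half_ri (x : ℝ) : ((((x:ℂ))^((1:ℂ)/2))).re = 0 ∨ ((((x:ℂ))^((1:ℂ)/2))).im = 0 := by
  rcases le_or_gt 0 x with hx | hx
  · right
    have : ((x:ℂ))^((1:ℂ)/2) = (((x ^ ((1:ℝ)/2) : ℝ)) : ℂ) := by
      rw [Complex.ofReal_cpow hx]
      norm_num
    rw [this, Complex.ofReal_im]
  · left
    rw [Complex.ofReal_cpow_of_nonpos hx.le]
    have h1 : ((-x : ℂ))^((1:ℂ)/2) = (((-x) ^ ((1:ℝ)/2) : ℝ) : ℂ) := by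
      rw [← Complex.ofReal_neg, Complex.ofReal_cpow (by linarith)]
      norm_num
    have h2 : Complex.exp ((Real.pi:ℂ) * Complex.I * ((1:ℂ)/2)) = Complex.I := by
      rw [show (Real.pi:ℂ) * Complex.I * ((1:ℂ)/2) = ((Real.pi/2 : ℝ):ℂ) * Complex.I by
        push_cast; ring, Complex.exp_mul_I, ← Complex.ofReal_cos, ← Complex.ofReal_sin,
        Real.cos_pi_div_two, Real.sin_pi_div_two]
      simp
    rw [h1, h2]
    simp

lemma mul_ri {z w : ℂ} (hz : z.re = 0 ∨ z.im = 0) (hw : w.re = 0 ∨ w.im = 0) :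
    (z*w).re = 0 ∨ (z*w).im = 0 := by
  rcases hz with h1 | h1 <;> rcases hw with h2 | h2
  · right; rw [Complex.mul_im, h1, h2]; ring
  · left; rw [Complex.mul_re, h1, h2]; ring
  · left; rw [Complex.mul_re, h1, h2]; ring
  · right; rw [Complex.mul_im, h1, h2]; ring


lemma Fq_pos_of_le_half (r m : ℕ) (hr : 3 ≤ r) (hodd : r % 2 = 1) (hm : 2 * m ≤ r - 1) :
    0 < Fq r m := by
  have h := Fq_sign r hr hodd m (by omega)
  rwa [Nat.sub_eq_zero_of_le (by omega), pow_zero, one_mul] at h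

lemma term_cast (k : ℕ) (a b c d e f g h : ℝ) :
    (((-1:ℂ)) ^ k * (a:ℂ) / ((b:ℂ) * (c:ℂ) * (d:ℂ) * (e:ℂ) * (f:ℂ) * (g:ℂ) * (h:ℂ))).im = 0 := by
  have hh : ((-1:ℂ)) ^ k * (a:ℂ) / ((b:ℂ) * (c:ℂ) * (d:ℂ) * (e:ℂ) * (f:ℂ) * (g:ℂ) * (h:ℂ)) =
      ((((-1:ℝ)) ^ k * a / (b * c * d * e * f * g * h) : ℝ) : ℂ) := by
    push_cast
    ring
  rw [hh, Complex.ofReal_im]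

set_option maxHeartbeats 2000000 in
theorem real_sixj_nr (r : ℕ) (hr : 3 ≤ r) (hodd : Odd r) (m₁ m₂ m₃ m₄ : ℕ)
    (hadm : Admissible6 r (nr r) m₁ m₂ (nr r) m₃ m₄) :
    (sixj r (nr r) m₁ m₂ (nr r) m₃ m₄).im = 0 := by
  have hodd' : r % 2 = 1 := Nat.odd_iff.mp hodd
  obtain ⟨H1, H2, H3, H4⟩ := hadm
  obtain ⟨hb1, hb2, hb3, he1, hs1, ht11, ht12, ht13⟩ := H1
  obtain ⟨-, hb4, hb5, he2, hs2, ht21, ht22, ht23⟩ := H2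
  obtain ⟨-, -, -, he3, hs3, ht31, ht32, ht33⟩ := H3
  obtain ⟨-, -, -, he4, hs4, ht41, ht42, ht43⟩ := H4
  have pe1 : (nr r + m₁ + m₂) % 2 = 0 := Nat.even_iff.mp he1
  have pe2 : (nr r + m₃ + m₄) % 2 = 0 := Nat.even_iff.mp he2
  have pe3 : (m₁ + nr r + m₄) % 2 = 0 := Nat.even_iff.mp he3
  have pe4 : (m₂ + nr r + m₃) % 2 = 0 := Nat.even_iff.mp he4
  clear he1 he2 he3 he4
  have hnd : nr r = (r-1)/2 ∨ nr r = (r-3)/2 := by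
    unfold nr
    split
    · left; rfl
    · right; rfl
  -- numerator positivity
  have hu1 : 0 < Fq r ((nr r + m₁ - m₂) / 2) := Fq_pos_of_le_half r _ hr hodd' (by omega)
  have hv1 : 0 < Fq r ((nr r + m₂ - m₁) / 2) := Fq_pos_of_le_half r _ hr hodd' (by omega)
  have hw1 : 0 < Fq r ((m₁ + m₂ - nr r) / 2) := Fq_pos_of_le_half r _ hr hodd' (by omega)
  have hu2 : 0 < Fq r ((nr r + m₃ - m₄) / 2) := Fq_pos_of_le_half r _ hr hodd' (by omega)
  have hv2 : 0 < Fq r ((nr r + m₄ - m₃) / 2) := Fq_pos_of_le_half r _ hr hodd' (by omega)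
  have hw2 : 0 < Fq r ((m₃ + m₄ - nr r) / 2) := Fq_pos_of_le_half r _ hr hodd' (by omega)
  have hu3 : 0 < Fq r ((m₁ + nr r - m₄) / 2) := Fq_pos_of_le_half r _ hr hodd' (by omega)
  have hv3 : 0 < Fq r ((m₁ + m₄ - nr r) / 2) := Fq_pos_of_le_half r _ hr hodd' (by omega)
  have hw3 : 0 < Fq r ((nr r + m₄ - m₁) / 2) := Fq_pos_of_le_half r _ hr hodd' (by omega)
  have hu4 : 0 < Fq r ((m₂ + nr r - m₃) / 2) := Fq_pos_of_le_half r _ hr hodd' (by omega)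
  have hv4 : 0 < Fq r ((m₂ + m₃ - nr r) / 2) := Fq_pos_of_le_half r _ hr hodd' (by omega)
  have hw4 : 0 < Fq r ((nr r + m₃ - m₂) / 2) := Fq_pos_of_le_half r _ hr hodd' (by omega)
  -- denominator product positivity
  have hD1 := Fq_sign r hr hodd' ((nr r + m₁ + m₂) / 2 + 1) (by omega)
  have hD2 := Fq_sign r hr hodd' ((nr r + m₃ + m₄) / 2 + 1) (by omega)
  have hD3 := Fq_sign r hr hodd' ((m₁ + nr r + m₄) / 2 + 1) (by omega)
  have hD4 := Fq_sign r hr hodd' ((m₂ + nr r + m₃) / 2 + 1) (by omega)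
  have heven : Even ((((nr r + m₁ + m₂) / 2 + 1) - (r-1)/2) + (((nr r + m₃ + m₄) / 2 + 1) - (r-1)/2)
      + (((m₁ + nr r + m₄) / 2 + 1) - (r-1)/2) + (((m₂ + nr r + m₃) / 2 + 1) - (r-1)/2)) :=
    Nat.even_iff.mpr (by omega)
  have hDD : 0 < Fq r ((nr r + m₁ + m₂) / 2 + 1) * Fq r ((nr r + m₃ + m₄) / 2 + 1) *
      Fq r ((m₁ + nr r + m₄) / 2 + 1) * Fq r ((m₂ + nr r + m₃) / 2 + 1) := by
    have hp := mul_pos (mul_pos (mul_pos hD1 hD2) hD3) hD4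
    have hq : ((-1:ℝ)^((((nr r + m₁ + m₂) / 2 + 1) - (r-1)/2)) * Fq r ((nr r + m₁ + m₂) / 2 + 1)) *
        ((-1:ℝ)^((((nr r + m₃ + m₄) / 2 + 1) - (r-1)/2)) * Fq r ((nr r + m₃ + m₄) / 2 + 1)) *
        ((-1:ℝ)^((((m₁ + nr r + m₄) / 2 + 1) - (r-1)/2)) * Fq r ((m₁ + nr r + m₄) / 2 + 1)) *
        ((-1:ℝ)^((((m₂ + nr r + m₃) / 2 + 1) - (r-1)/2)) * Fq r ((m₂ + nr r + m₃) / 2 + 1)) =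
        (-1:ℝ)^((((nr r + m₁ + m₂) / 2 + 1) - (r-1)/2) + (((nr r + m₃ + m₄) / 2 + 1) - (r-1)/2)
          + (((m₁ + nr r + m₄) / 2 + 1) - (r-1)/2) + (((m₂ + nr r + m₃) / 2 + 1) - (r-1)/2)) *
        (Fq r ((nr r + m₁ + m₂) / 2 + 1) * Fq r ((nr r + m₃ + m₄) / 2 + 1) *
          Fq r ((m₁ + nr r + m₄) / 2 + 1) * Fq r ((m₂ + nr r + m₃) / 2 + 1)) := by
      rw [pow_add, pow_add, pow_add]
      ring
    rw [hq, Even.neg_one_pow heven, one_mul] at hp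
    exact hp
  -- denominators nonzero
  have hD1ne : Fq r ((nr r + m₁ + m₂) / 2 + 1) ≠ 0 := Fq_ne r hr hodd' _ (by omega)
  have hD2ne : Fq r ((nr r + m₃ + m₄) / 2 + 1) ≠ 0 := Fq_ne r hr hodd' _ (by omega)
  have hD3ne : Fq r ((m₁ + nr r + m₄) / 2 + 1) ≠ 0 := Fq_ne r hr hodd' _ (by omega)
  have hD4ne : Fq r ((m₂ + nr r + m₃) / 2 + 1) ≠ 0 := Fq_ne r hr hodd' _ (by omega)
  -- the four real delta-squares
  set X1 : ℝ := Fq r ((nr r + m₁ - m₂) / 2) * Fq r ((nr r + m₂ - m₁) / 2) *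
      Fq r ((m₁ + m₂ - nr r) / 2) / Fq r ((nr r + m₁ + m₂) / 2 + 1) with hX1
  set X2 : ℝ := Fq r ((nr r + m₃ - m₄) / 2) * Fq r ((nr r + m₄ - m₃) / 2) *
      Fq r ((m₃ + m₄ - nr r) / 2) / Fq r ((nr r + m₃ + m₄) / 2 + 1) with hX2
  set X3 : ℝ := Fq r ((m₁ + nr r - m₄) / 2) * Fq r ((m₁ + m₄ - nr r) / 2) *
      Fq r ((nr r + m₄ - m₁) / 2) / Fq r ((m₁ + nr r + m₄) / 2 + 1) with hX3
  set X4 : ℝ := Fq r ((m₂ + nr r - m₃) / 2) * Fq r ((m₂ + m₃ - nr r) / 2) *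
      Fq r ((nr r + m₃ - m₂) / 2) / Fq r ((m₂ + nr r + m₃) / 2 + 1) with hX4
  have hN1 : 0 < Fq r ((nr r + m₁ - m₂) / 2) * Fq r ((nr r + m₂ - m₁) / 2) *
      Fq r ((m₁ + m₂ - nr r) / 2) := mul_pos (mul_pos hu1 hv1) hw1
  have hN2 : 0 < Fq r ((nr r + m₃ - m₄) / 2) * Fq r ((nr r + m₄ - m₃) / 2) *
      Fq r ((m₃ + m₄ - nr r) / 2) := mul_pos (mul_pos hu2 hv2) hw2
  have hN3 : 0 < Fq r ((m₁ + nr r - m₄) / 2) * Fq r ((m₁ + m₄ - nr r) / 2) *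
      Fq r ((nr r + m₄ - m₁) / 2) := mul_pos (mul_pos hu3 hv3) hw3
  have hN4 : 0 < Fq r ((m₂ + nr r - m₃) / 2) * Fq r ((m₂ + m₃ - nr r) / 2) *
      Fq r ((nr r + m₃ - m₂) / 2) := mul_pos (mul_pos hu4 hv4) hw4
  have hX1ne : X1 ≠ 0 := div_ne_zero hN1.ne' hD1ne
  have hX2ne : X2 ≠ 0 := div_ne_zero hN2.ne' hD2ne
  have hX3ne : X3 ≠ 0 := div_ne_zero hN3.ne' hD3ne
  have hX4ne : X4 ≠ 0 := div_ne_zero hN4.ne' hD4ne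
  have hQ : 0 < X1 * X2 * X3 * X4 := by
    rw [hX1, hX2, hX3, hX4, div_mul_div_comm, div_mul_div_comm, div_mul_div_comm]
    exact div_pos (mul_pos (mul_pos (mul_pos hN1 hN2) hN3) hN4) hDD
  -- delta casts
  have hd1 : qdelta r (nr r) m₁ m₂ = ((X1 : ℝ) : ℂ) ^ ((1:ℂ)/2) := by
    unfold qdelta
    rw [qfact_eq r hr, qfact_eq r hr, qfact_eq r hr, qfact_eq r hr, hX1]
    congr 1
    push_cast
    ring
  have hd2 : qdelta r (nr r) m₃ m₄ = ((X2 : ℝ) : ℂ) ^ ((1:ℂ)/2) := by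
    unfold qdelta
    rw [qfact_eq r hr, qfact_eq r hr, qfact_eq r hr, qfact_eq r hr, hX2]
    congr 1
    push_cast
    ring
  have hd3 : qdelta r m₁ (nr r) m₄ = ((X3 : ℝ) : ℂ) ^ ((1:ℂ)/2) := by
    unfold qdelta
    rw [qfact_eq r hr, qfact_eq r hr, qfact_eq r hr, qfact_eq r hr, hX3]
    congr 1
    push_cast
    ring
  have hd4 : qdelta r m₂ (nr r) m₃ = ((X4 : ℝ) : ℂ) ^ ((1:ℂ)/2) := by
    unfold qdelta
    rw [qfact_eq r hr, qfact_eq r hr, qfact_eq r hr, qfact_eq r hr, hX4]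
    congr 1
    push_cast
    ring
  -- the product of deltas is real
  set P : ℂ := ((X1 : ℝ) : ℂ) ^ ((1:ℂ)/2) * ((X2 : ℝ) : ℂ) ^ ((1:ℂ)/2) *
      ((X3 : ℝ) : ℂ) ^ ((1:ℂ)/2) * ((X4 : ℝ) : ℂ) ^ ((1:ℂ)/2) with hP
  have hri : P.re = 0 ∨ P.im = 0 :=
    mul_ri (mul_ri (mul_ri (cpow_half_ri X1) (cpow_half_ri X2)) (cpow_half_ri X3))
      (cpow_half_ri X4)
  have hP2 : P ^ 2 = ((X1 * X2 * X3 * X4 : ℝ) : ℂ) := by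
    have : P ^ 2 = (((X1 : ℝ) : ℂ) ^ ((1:ℂ)/2)) ^ 2 * (((X2 : ℝ) : ℂ) ^ ((1:ℂ)/2)) ^ 2 *
        (((X3 : ℝ) : ℂ) ^ ((1:ℂ)/2)) ^ 2 * (((X4 : ℝ) : ℂ) ^ ((1:ℂ)/2)) ^ 2 := by
      rw [hP]; ring
    rw [this, cpow_half_sq X1 hX1ne, cpow_half_sq X2 hX2ne, cpow_half_sq X3 hX3ne,
      cpow_half_sq X4 hX4ne]
    push_cast
    ring
  have hPim : P.im = 0 := by
    rcases hri with hre | him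
    · exfalso
      have h2 := congrArg Complex.re hP2
      rw [sq, Complex.mul_re, hre, Complex.ofReal_re] at h2
      nlinarith [hQ]
    · exact him
  -- the I power is real
  obtain ⟨t, ht⟩ : ∃ t : ℤ, -(((nr r : ℕ) : ℤ) + (m₁ : ℤ) + (m₂ : ℤ) + ((nr r : ℕ) : ℤ) +
      (m₃ : ℤ) + (m₄ : ℤ)) = 2 * t :=
    ⟨-(((nr r + m₁ + m₂ + nr r + m₃ + m₄) / 2 : ℕ) : ℤ), by omega⟩
  have hA : Complex.I ^ (-(((nr r : ℕ) : ℤ) + (m₁ : ℤ) + (m₂ : ℤ) + ((nr r : ℕ) : ℤ) +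
      (m₃ : ℤ) + (m₄ : ℤ))) = ((((-1:ℝ) ^ t : ℝ)) : ℂ) := by
    rw [ht, zpow_mul, Complex.ofReal_zpow]
    rw [show Complex.I ^ (2:ℤ) = -1 by
      rw [show (2:ℤ) = ((2:ℕ):ℤ) from rfl, zpow_natCast, Complex.I_sq]]
    norm_num
  -- conclude
  unfold sixj
  rw [hd1, hd2, hd3, hd4, hA]
  have hgroup : ∀ S : ℂ, ((((((((-1:ℝ) ^ t : ℝ) : ℂ) * (((X1 : ℝ) : ℂ) ^ ((1:ℂ)/2))) *
      (((X2 : ℝ) : ℂ) ^ ((1:ℂ)/2))) * (((X3 : ℝ) : ℂ) ^ ((1:ℂ)/2))) *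
      (((X4 : ℝ) : ℂ) ^ ((1:ℂ)/2))) * S) = ((((-1:ℝ) ^ t : ℝ) : ℂ) * P) * S := by
    intro S
    rw [hP]
    ring
  rw [hgroup]
  have hSum : (∑ k ∈ Finset.Icc
      (max (max ((nr r + m₁ + m₂) / 2) ((nr r + m₃ + m₄) / 2))
        (max ((m₁ + nr r + m₄) / 2) ((m₂ + nr r + m₃) / 2)))
      (min ((nr r + m₁ + nr r + m₃) / 2)
        (min ((nr r + m₂ + nr r + m₄) / 2) ((m₁ + m₂ + m₃ + m₄) / 2))),
      ((-1 : ℂ) ^ k * qfact r (k + 1)) /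
        (qfact r (k - (nr r + m₁ + m₂) / 2) * qfact r (k - (nr r + m₃ + m₄) / 2) *
         qfact r (k - (m₁ + nr r + m₄) / 2) * qfact r (k - (m₂ + nr r + m₃) / 2) *
         qfact r ((nr r + m₁ + nr r + m₃) / 2 - k) * qfact r ((nr r + m₂ + nr r + m₄) / 2 - k) *
         qfact r ((m₁ + m₂ + m₃ + m₄) / 2 - k))).im = 0 := by
    rw [Complex.im_sum]
    refine Finset.sum_eq_zero fun k _ => ?_
    simp only [qfact_eq r hr]
    exact term_cast k _ _ _ _ _ _ _ _
  rw [Complex.mul_im, hSum, Complex.mul_im, Complex.ofReal_re, Complex.ofReal_im, hPim]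
  ring
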